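/- Let $p$ be a prime, let $g$ be an integer with $\gcd(g,p)=1$, and let $n$ be the multiplicative order of $g$ modulo $p$. If $n \equiv 2 \pmod 4$, then $Q(g,p) \equiv 0 \pmod p$, where $Q(g,p) = \sum_{k=1}^{n} g^{k^2} \pmod p$. -/

import Mathlib

/-- The quadratic Gauss-type sum `Q(g,p) = ∑_{k=1}^{n} g^{k²} (mod p)`, where `n` is the
multiplicative order of `g` modulo `p`. -/
def quadGaussSum (p : ℕ) (g : ℤ) (n : ℕ) : ZMod p :=
  ∑ k ∈ Finset.Icc 1 n, (g : ZMod p) ^ (k ^ 2)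

/-- If `n`, the multiplicative order of `g` mod `p`, satisfies `n ≡ 2 (mod 4)`,
then `Q(g,p) ≡ 0 (mod p)`. -/
theorem quadGaussSum_eq_zero_of_order_two_mod_four (p : ℕ) (hp : p.Prime)
    (g : ℤ) (hg : Int.gcd g p = 1)
    (n : ℕ) (hn : n = orderOf ((g : ZMod p))) (hn4 : n % 4 = 2) :
    quadGaussSum p g n = 0 := by
  haveI : Fact p.Prime := ⟨hp⟩
  set u : ZMod p := (g : ZMod p) with hu
  obtain ⟨m, hm⟩ : ∃ m, n = 2 * m := ⟨n / 2, by omega⟩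
  obtain ⟨t, ht⟩ : ∃ t, m = 2 * t + 1 := ⟨m / 2, by omega⟩
  have hun : u ^ n = 1 := by rw [hn]; exact pow_orderOf_eq_one u
  have hum2 : (u ^ m) ^ 2 = 1 := by
    rw [← pow_mul, mul_comm, ← hm]; exact hun
  have hum1 : u ^ m ≠ 1 := by
    intro h
    have hd : orderOf u ∣ m := orderOf_dvd_of_pow_eq_one h
    rw [← hn] at hd
    have := Nat.le_of_dvd (by omega) hd
    omega
  have humm : u ^ m = -1 := by
    rcases sq_eq_one_iff.mp hum2 with h | h
    · exact absurd h hum1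
    · exact h
  have key : ∀ k : ℕ, u ^ ((k + m) ^ 2) = -u ^ (k ^ 2) := by
    intro k
    have hexp : (k + m) ^ 2 = k ^ 2 + n * k + n * t + m := by
      subst hm; subst ht; ring
    rw [hexp, pow_add, pow_add, pow_add, pow_mul, pow_mul, hun, one_pow, one_pow, humm]
    ring
  have hmn : m ≤ n := by omega
  unfold quadGaussSum
  rw [← hu, show Finset.Icc 1 n = Finset.Ioc 0 n by rfl,
    ← Finset.sum_Ioc_consecutive _ (Nat.zero_le m) hmn]
  have hre : ∑ k ∈ Finset.Ioc m n, u ^ (k ^ 2) = ∑ k ∈ Finset.Ioc 0 m, -u ^ (k ^ 2) := by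
    have : Finset.Ioc m n = (Finset.Ioc 0 m).map (addRightEmbedding m) := by
      rw [Finset.map_add_right_Ioc]
      congr 1 <;> omega
    rw [this, Finset.sum_map]
    refine Finset.sum_congr rfl fun k _ => ?_
    simpa [addRightEmbedding] using key k
  rw [hre, Finset.sum_neg_distrib]
  ring
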